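/- Let $X$ be a Banach space and $f : [a,b] \to X$ differentiable with Bochner-integrable derivative. Then for every $s \in [a,b]$: $\left\| f(s) - \frac{1}{b-a}\int_a^b f(t)\,dt \right\| \le \frac{1}{b-a}\left[\int_a^s (t-a)\|f'(t)\|\,dt + \int_s^b (b-t)\|f'(t)\|\,dt \right]$. -/

import Mathlib

open MeasureTheory intervalIntegral

theorem stmt6 {X : Type*} [NormedAddCommGroup X] [NormedSpace ℝ X] [CompleteSpace X]
    {a b : ℝ} (hab : a < b) {f f' : ℝ → X}
    (hderiv : ∀ t ∈ Set.Icc a b, HasDerivAt f (f' t) t)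
    (hint : IntervalIntegrable f' volume a b) {s : ℝ} (hs : s ∈ Set.Icc a b) :
    ‖f s - (b - a)⁻¹ • (∫ t in a..b, f t)‖ ≤
      (b - a)⁻¹ * ((∫ t in a..s, (t - a) * ‖f' t‖) + (∫ t in s..b, (b - t) * ‖f' t‖)) := by
  obtain ⟨has, hsb⟩ := hs
  have hba : (0:ℝ) < b - a := sub_pos.2 hab
  have hfc : ContinuousOn f (Set.Icc a b) := fun t ht =>
    (hderiv t ht).continuousAt.continuousWithinAt
  have hIcc1 : Set.uIcc a s ⊆ Set.Icc a b := by
    rw [Set.uIcc_of_le has]; exact Set.Icc_subset_Icc le_rfl hsb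
  have hIcc2 : Set.uIcc s b ⊆ Set.Icc a b := by
    rw [Set.uIcc_of_le hsb]; exact Set.Icc_subset_Icc has le_rfl
  have hfint1 : IntervalIntegrable f volume a s := (hfc.mono hIcc1).intervalIntegrable
  have hfint2 : IntervalIntegrable f volume s b := (hfc.mono hIcc2).intervalIntegrable
  have hint' : IntegrableOn f' (Set.Icc a b) :=
    (intervalIntegrable_iff_integrableOn_Icc_of_le hab.le).mp hint
  have hint1 : IntervalIntegrable (fun t => (t - a) • f' t) volume a s := by
    rw [intervalIntegrable_iff_integrableOn_Icc_of_le has]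
    exact (hint'.mono_set (Set.Icc_subset_Icc le_rfl hsb)).continuousOn_smul
      ((continuous_id.sub continuous_const).continuousOn) isCompact_Icc
  have hint2 : IntervalIntegrable (fun t => (t - b) • f' t) volume s b := by
    rw [intervalIntegrable_iff_integrableOn_Icc_of_le hsb]
    exact (hint'.mono_set (Set.Icc_subset_Icc has le_rfl)).continuousOn_smul
      ((continuous_id.sub continuous_const).continuousOn) isCompact_Icc
  have key1 : (∫ t in a..s, ((t - a) • f' t + f t)) = (s - a) • f s := by
    have := intervalIntegral.integral_eq_sub_of_hasDerivAt
      (f := fun t => (t - a) • f t) (f' := fun t => (t - a) • f' t + f t) (a := a) (b := s)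
      (fun t ht => by have h := ((hasDerivAt_id t).sub_const a).smul (hderiv t (hIcc1 ht)); simp only [id_eq, one_smul] at h; exact h)
      (hint1.add hfint1)
    simpa using this
  have key2 : (∫ t in s..b, ((t - b) • f' t + f t)) = (b - s) • f s := by
    have := intervalIntegral.integral_eq_sub_of_hasDerivAt
      (f := fun t => (t - b) • f t) (f' := fun t => (t - b) • f' t + f t) (a := s) (b := b)
      (fun t ht => by have h := ((hasDerivAt_id t).sub_const b).smul (hderiv t (hIcc2 ht)); simp only [id_eq, one_smul] at h; exact h)
      (hint2.add hfint2)
    rw [this]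
    simp [neg_sub, ← neg_smul]
  have I1 : (∫ t in a..s, (t - a) • f' t) = (s - a) • f s - ∫ t in a..s, f t := by
    rw [intervalIntegral.integral_add hint1 hfint1] at key1
    exact eq_sub_of_add_eq key1
  have I2 : (∫ t in s..b, (t - b) • f' t) = (b - s) • f s - ∫ t in s..b, f t := by
    rw [intervalIntegral.integral_add hint2 hfint2] at key2
    exact eq_sub_of_add_eq key2
  have hsplit : (∫ t in a..b, f t) = (∫ t in a..s, f t) + ∫ t in s..b, f t :=
    (intervalIntegral.integral_add_adjacent_intervals hfint1 hfint2).symm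
  have hid : f s - (b - a)⁻¹ • (∫ t in a..b, f t) =
      (b - a)⁻¹ • ((∫ t in a..s, (t - a) • f' t) + ∫ t in s..b, (t - b) • f' t) := by
    rw [I1, I2, hsplit]
    rw [show (s - a) • f s - (∫ t in a..s, f t) + ((b - s) • f s - ∫ t in s..b, f t)
        = (b - a) • f s - ((∫ t in a..s, f t) + ∫ t in s..b, f t) by
      rw [show b - a = (s - a) + (b - s) by ring, add_smul]; abel]
    rw [smul_sub, smul_smul, inv_mul_cancel₀ hba.ne']
    simp
  rw [hid, norm_smul, Real.norm_eq_abs, abs_of_pos (inv_pos.2 hba)]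
  have hA : ‖∫ t in a..s, (t - a) • f' t‖ ≤ ∫ t in a..s, (t - a) * ‖f' t‖ := by
    refine (intervalIntegral.norm_integral_le_integral_norm has).trans_eq ?_
    refine intervalIntegral.integral_congr fun t ht => ?_
    rw [Set.uIcc_of_le has] at ht
    rw [norm_smul, Real.norm_eq_abs, abs_of_nonneg (sub_nonneg.2 ht.1)]
  have hB : ‖∫ t in s..b, (t - b) • f' t‖ ≤ ∫ t in s..b, (b - t) * ‖f' t‖ := by
    refine (intervalIntegral.norm_integral_le_integral_norm hsb).trans_eq ?_
    refine intervalIntegral.integral_congr fun t ht => ?_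
    rw [Set.uIcc_of_le hsb] at ht
    rw [norm_smul, Real.norm_eq_abs, abs_of_nonpos (sub_nonpos.2 ht.2), neg_sub]
  have := (norm_add_le _ _).trans (add_le_add hA hB)
  exact mul_le_mul_of_nonneg_left this (inv_pos.2 hba).le
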